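/- Let K be a local field of characteristic p with maximal ideal 𝔭, and let ℘(x) = x^p − x. Then for every integer n > 0, 𝔭^{−n} ∩ ℘(K) = ℘(𝔭^{−⌊n/p⌋}). -/

import Mathlib

/- STATEMENT 10: for K a local field of characteristic p and n > 0,
𝔭^{-n} ∩ ℘(K) = ℘(𝔭^{-⌊n/p⌋}), where ℘(x) = x^p - x and 𝔭^{-n} is the
fractional ideal of elements of valuation ≥ -n (coefficients vanish below -n). -/
theorem stmt10 (p : ℕ) (hp : p.Prime) (k : Type*) [Field k] [Fintype k] [CharP k p]
    (n : ℕ) (hn : 0 < n) :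
    {x : LaurentSeries k | ∀ i : ℤ, i < -(n : ℤ) → x.coeff i = 0} ∩
        Set.range (fun y : LaurentSeries k => y ^ p - y) =
      (fun y : LaurentSeries k => y ^ p - y) ''
        {x : LaurentSeries k | ∀ i : ℤ, i < -((n / p : ℕ) : ℤ) → x.coeff i = 0} := by
  have hp0 : 0 < (p : ℤ) := by exact_mod_cast hp.pos
  set m : ℕ := n / p with hm
  ext x
  constructor
  · rintro ⟨hx, y, rfl⟩
    simp only [Set.mem_setOf_eq] at hx
    refine ⟨y, ?_, rfl⟩
    intro i hi
    rcases eq_or_ne y 0 with rfl | hy0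
    · simp
    -- show -(m:ℤ) ≤ y.order
    have horder : -((m : ℤ)) ≤ y.order := by
      by_contra h
      push_neg at h
      -- y.order < -m, so y.order < 0
      have hneg : y.order < 0 := lt_of_lt_of_le h (neg_nonpos.mpr (Int.natCast_nonneg m))
      -- the coefficient of y^p - y at p * y.order is nonzero
      have hpow_ne : y ^ p ≠ 0 := pow_ne_zero _ hy0
      have hord_pow : (y ^ p).order = (p : ℤ) * y.order := by
        rw [HahnSeries.order_pow, nsmul_eq_mul]
      have hcoeff_pow : (y ^ p).coeff ((p : ℤ) * y.order) ≠ 0 := by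
        rw [← hord_pow]
        exact fun h => hpow_ne (HahnSeries.coeff_order_eq_zero.mp h)
      have hlt : (p : ℤ) * y.order < y.order := by
        nlinarith [hp.two_le, (show (2:ℤ) ≤ p by exact_mod_cast hp.two_le)]
      have hycoeff : y.coeff ((p : ℤ) * y.order) = 0 :=
        HahnSeries.coeff_eq_zero_of_lt_order hlt
      have hne : (y ^ p - y).coeff ((p : ℤ) * y.order) ≠ 0 := by
        rw [HahnSeries.coeff_sub, hycoeff, sub_zero]
        exact hcoeff_pow
      -- hence p * y.order ≥ -n
      have hge : ¬ ((p : ℤ) * y.order < -(n : ℤ)) := fun hc => hne (hx _ hc)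
      push_neg at hge
      -- but y.order < -m gives p * y.order < -n
      have h1 : y.order ≤ -(m : ℤ) - 1 := by omega
      have h2 : (p : ℤ) * y.order ≤ (p : ℤ) * (-(m : ℤ) - 1) :=
        mul_le_mul_of_nonneg_left h1 (le_of_lt hp0)
      have h3 : (n : ℤ) < (p : ℤ) * ((m : ℤ) + 1) := by
        have h4 := Nat.div_add_mod n p
        have h5 := Nat.mod_lt n hp.pos
        have h4' : (n : ℤ) = (p : ℤ) * (m : ℤ) + ((n % p : ℕ) : ℤ) := by
          exact_mod_cast (by omega : n = p * (n / p) + n % p)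
        have h5' : ((n % p : ℕ) : ℤ) < (p : ℤ) := by exact_mod_cast h5
        linarith
      have : (p : ℤ) * y.order < -(n : ℤ) := by nlinarith
      exact (hge : -(n : ℤ) ≤ (p : ℤ) * y.order).not_gt this
    exact HahnSeries.coeff_eq_zero_of_lt_order (lt_of_lt_of_le hi horder)
  · rintro ⟨y, hy, rfl⟩
    simp only [Set.mem_setOf_eq] at hy
    refine ⟨?_, ⟨y, rfl⟩⟩
    intro i hi
    rcases eq_or_ne y 0 with rfl | hy0
    · simp [zero_pow hp.pos.ne']
    have horder : -((m : ℤ)) ≤ y.order := by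
      by_contra h
      push_neg at h
      exact hy0 (HahnSeries.coeff_order_eq_zero.mp (hy _ h))
    have hmn : (p : ℤ) * (m : ℤ) ≤ (n : ℤ) := by
      have := Nat.div_mul_le_self n p
      push_cast
      exact_mod_cast (by rw [mul_comm]; exact this : p * m ≤ n)
    have hord_pow : (y ^ p).order = (p : ℤ) * y.order := by
      rw [HahnSeries.order_pow, nsmul_eq_mul]
    have h1 : i < (y ^ p).order := by
      rw [hord_pow]
      have : -(n : ℤ) ≤ (p : ℤ) * y.order := by nlinarith
      linarith
    have h2 : i < y.order := by
      have hmn' : (m : ℤ) ≤ (n : ℤ) := by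
        exact_mod_cast Nat.div_le_self n p
      linarith
    rw [HahnSeries.coeff_sub, HahnSeries.coeff_eq_zero_of_lt_order h1,
      HahnSeries.coeff_eq_zero_of_lt_order h2, sub_zero]
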